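/- arXiv:1105.4796 — 3 statements merged into one kernel-verified Lean document; each statement's English description precedes it below -/
import Mathlib

section
/- Let u be a Lyndon word of length at least 2 over a linearly ordered alphabet, and write u = vw where w is the longest proper suffix of u that is itself a Lyndon word. Then v is a Lyndon word. -/
/-- A nonempty word `u` is a Lyndon (associative Lyndon–Shirshov) word if for every
factorization `u = v ++ w` into nonempty words, `vw > wv` lexicographically. -/
def IsLyndon {X : Type*} [LinearOrder X] (u : List X) : Prop :=
  u ≠ [] ∧ ∀ v w : List X, v ≠ [] → w ≠ [] → u = v ++ w →
    List.Lex (· < ·) (w ++ v) (v ++ w)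

namespace LyndonAux

open List

variable {X : Type*} [LinearOrder X]

/-- `x` is "strongly less" than `y`: any extension of `x` is lexicographically below `y`. -/
def SLT (x y : List X) : Prop := ∀ t : List X, List.Lex (· < ·) (x ++ t) y

lemma not_lex_append_self (x t : List X) : ¬ List.Lex (· < ·) (x ++ t) x := by
  induction x with
  | nil => intro h; cases h
  | cons a x ih =>
    intro h
    rw [cons_append] at h
    cases h with
    | rel h => exact lt_irrefl _ h
    | cons h => exact ih h

lemma not_lex_nil (x : List X) : ¬ List.Lex (· < ·) x ([] : List X) := by
  intro h; cases h

lemma not_lex_self (x : List X) : ¬ List.Lex (· < ·) x x := by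
  have := not_lex_append_self x []
  simpa using this

lemma lex_append_right {x y : List X} (c : List X) (h : List.Lex (· < ·) x y) :
    List.Lex (· < ·) x (y ++ c) := by
  induction h with
  | nil => exact List.Lex.nil
  | rel h => exact List.Lex.rel h
  | cons _ ih => exact List.Lex.cons ih

lemma lex_append_left_iff (p : List X) {x y : List X} :
    List.Lex (· < ·) (p ++ x) (p ++ y) ↔ List.Lex (· < ·) x y := by
  induction p with
  | nil => simp
  | cons a p ih =>
    constructor
    · intro h
      rw [cons_append, cons_append] at h
      cases h with
      | rel h => exact absurd h (lt_irrefl a)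
      | cons h => exact ih.mp h
    · intro h
      rw [cons_append, cons_append]
      exact List.Lex.cons (ih.mpr h)

lemma lex_trans_aux {a y : List X} (r : List X) (h1 : List.Lex (· < ·) a y) :
    ∀ {z : List X}, List.Lex (· < ·) (y ++ r) z → List.Lex (· < ·) a z := by
  induction h1 with
  | nil =>
    intro z h2
    cases h2 <;> exact List.Lex.nil
  | @rel a l b l' hab =>
    intro z h2
    rw [cons_append] at h2
    cases h2 with
    | rel h => exact List.Lex.rel (lt_trans hab h)
    | cons h => exact List.Lex.rel hab
  | @cons a l l' h ih =>
    intro z h2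
    rw [cons_append] at h2
    cases h2 with
    | rel h => exact List.Lex.rel h
    | cons h => exact List.Lex.cons (ih h)

lemma lex_append_same {p q : List X} (h : List.Lex (· < ·) p q)
    (hlen : p.length = q.length) (s : List X) :
    List.Lex (· < ·) (p ++ s) (q ++ s) := by
  induction h with
  | nil => simp at hlen
  | rel h => exact List.Lex.rel h
  | cons h ih =>
    rw [cons_append, cons_append]
    exact List.Lex.cons (ih (by simpa using hlen))

lemma slt_trichotomy : ∀ (x y : List X), x <+: y ∨ y <+: x ∨ SLT x y ∨ SLT y x := by
  intro x
  induction x with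
  | nil => intro y; exact Or.inl (nil_prefix)
  | cons a x ih =>
    intro y
    cases y with
    | nil => exact Or.inr (Or.inl nil_prefix)
    | cons b y =>
      rcases lt_trichotomy a b with h | h | h
      · refine Or.inr (Or.inr (Or.inl ?_))
        intro t; exact List.Lex.rel h
      · subst h
        rcases ih y with h | h | h | h
        · exact Or.inl (List.cons_prefix_cons.mpr ⟨rfl, h⟩)
        · exact Or.inr (Or.inl (List.cons_prefix_cons.mpr ⟨rfl, h⟩))
        · refine Or.inr (Or.inr (Or.inl ?_))
          intro t; rw [cons_append]; exact List.Lex.cons (h t)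
        · refine Or.inr (Or.inr (Or.inr ?_))
          intro t; rw [cons_append]; exact List.Lex.cons (h t)
      · refine Or.inr (Or.inr (Or.inr ?_))
        intro t; exact List.Lex.rel h

lemma slt_append_left {x y : List X} (c : List X) (h : SLT x y) : SLT (x ++ c) y := by
  intro t; rw [append_assoc]; exact h (c ++ t)

lemma slt_append_right {x y : List X} (c : List X) (h : SLT x y) : SLT x (y ++ c) :=
  fun t => lex_append_right c (h t)

lemma slt_trans {x y z : List X} (h1 : SLT x y) (h2 : SLT y z) : SLT x z :=
  fun t => lex_trans_aux [] (h1 t) (h2 [])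

lemma slt_not_prefix {x y : List X} (h : SLT x y) (hp : x <+: y) : False := by
  obtain ⟨c, rfl⟩ := hp
  exact not_lex_self (x ++ c) (h c)

lemma slt_not_prefix' {x y : List X} (h : SLT x y) (hp : y <+: x) : False := by
  obtain ⟨c, hc⟩ := hp
  have := h []
  rw [← hc, append_assoc] at this
  exact not_lex_append_self y (c ++ []) this

lemma slt_asymm {x y : List X} (h1 : SLT x y) (h2 : SLT y x) : False :=
  slt_not_prefix (slt_trans h1 h2) (List.prefix_refl x)

lemma border_free {x b : List X} (hx : IsLyndon x) (hpre : b <+: x) (hsuf : b <:+ x)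
    (hne : b ≠ x) (h0 : b ≠ []) : False := by
  obtain ⟨q, hq⟩ := hpre
  obtain ⟨p, hp⟩ := hsuf
  have hq0 : q ≠ [] := by rintro rfl; rw [append_nil] at hq; exact hne hq
  have hp0 : p ≠ [] := by rintro rfl; rw [nil_append] at hp; exact hne hp
  have h1 := hx.2 b q h0 hq0 hq.symm
  have h2 := hx.2 p b hp0 h0 hp.symm
  rw [hp, ← hq] at h2
  have h3 : List.Lex (· < ·) p q := (lex_append_left_iff b).mp h2
  have hlen : p.length = q.length := by
    have e1 := congrArg List.length hq
    have e2 := congrArg List.length hp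
    simp only [length_append] at e1 e2
    omega
  have h4 : List.Lex (· < ·) (p ++ b) (q ++ b) := lex_append_same h3 hlen b
  rw [hp] at h4
  rw [hq] at h1
  have h5 : List.Lex (· < ·) ((q ++ b) ++ []) x := by rwa [append_nil]
  exact not_lex_self x (lex_trans_aux [] h4 h5)

lemma lyndon_slt_of_suffix {u s : List X} (hu : IsLyndon u) (hs : s <:+ u)
    (hne : s ≠ u) (h0 : s ≠ []) : SLT s u := by
  obtain ⟨p, hp⟩ := hs
  have hp0 : p ≠ [] := by rintro rfl; rw [nil_append] at hp; exact hne hp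
  have hlyn := hu.2 p s hp0 h0 hp.symm
  rcases slt_trichotomy s u with h | h | h | h
  · exact (border_free hu h ⟨p, hp⟩ hne h0).elim
  · exfalso
    have h1 : u.length ≤ s.length := List.IsPrefix.length_le h
    have h2 : s.length ≤ u.length := List.IsSuffix.length_le ⟨p, hp⟩
    exact hne (List.IsSuffix.eq_of_length ⟨p, hp⟩ (le_antisymm h2 h1))
  · exact h
  · exfalso
    rw [hp] at hlyn
    have h5 : List.Lex (· < ·) (u ++ []) s := by have := h []; exact this
    exact not_lex_append_self s p (lex_trans_aux [] hlyn h5)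

lemma lyndon_of_slt {u : List X} (h0 : u ≠ [])
    (H : ∀ s, s <:+ u → s ≠ u → s ≠ [] → SLT s u) : IsLyndon u := by
  refine ⟨h0, ?_⟩
  intro a b ha hb hab
  have hsuf : b <:+ u := ⟨a, hab.symm⟩
  have hne : b ≠ u := by
    intro h
    have := congrArg List.length hab
    rw [h] at this
    simp only [length_append] at this
    have : a.length = 0 := by omega
    exact ha (List.length_eq_zero_iff.mp this)
  have := H b hsuf hne hb a
  rwa [hab] at this

lemma contra1 {s e w u : List X} (hwL : IsLyndon w) (hwu : SLT w u)
    (hus : u = s ++ (e ++ w)) (hs0 : s ≠ []) (hzw : SLT (s ++ w) w) : False := by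
  rcases slt_trichotomy s w with h | h | h | h
  · -- s <+: w : w = s ++ d, get SLT w d, contradiction with Lyndon w
    obtain ⟨d, hd⟩ := h
    subst hd
    have hWd : SLT (s ++ d) d := by
      intro t
      have h' := hzw t
      rw [append_assoc] at h'
      exact (lex_append_left_iff s).mp h'
    cases d with
    | nil => exact not_lex_nil _ (hWd [])
    | cons c d' =>
      have hdsuf : (c :: d') <:+ (s ++ (c :: d')) := ⟨s, rfl⟩
      have hdne : (c :: d') ≠ s ++ (c :: d') := by
        intro hh
        have := congrArg List.length hh
        simp only [length_append] at this
        have : s.length = 0 := by omega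
        exact hs0 (List.length_eq_zero_iff.mp this)
      exact slt_asymm hWd (lyndon_slt_of_suffix hwL hdsuf hdne (by simp))
  · -- w <+: s
    obtain ⟨s₂, hs2⟩ := h
    have := hzw []
    rw [← hs2, append_assoc, append_assoc] at this
    exact not_lex_append_self w (s₂ ++ (w ++ [])) this
  · -- SLT s w
    have : SLT u w := by rw [hus]; exact slt_append_left (e ++ w) h
    exact slt_asymm this hwu
  · -- SLT w s
    have h2 : SLT (s ++ w) s := slt_trans hzw h
    have := h2 []
    rw [append_assoc] at this
    exact not_lex_append_self s (w ++ []) this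

lemma contra2 {u v w s : List X} (hu : IsLyndon u) (hwL : IsLyndon w)
    (hsplit : u = v ++ w) (hv : v ≠ []) (hw0 : w ≠ []) (hsv : s <+: v) (hs0 : s ≠ [])
    (hwz : w <+: s ++ w) : False := by
  rcases le_or_gt w.length s.length with hle | hlt
  · -- w <+: s, so w is a border of u
    have hws : w <+: s := List.prefix_of_prefix_length_le hwz (List.prefix_append s w) hle
    have hwu_pre : w <+: u := hws.trans (hsv.trans (hsplit ▸ List.prefix_append v w))
    have hwu_suf : w <:+ u := ⟨v, hsplit.symm⟩
    have hwne : w ≠ u := by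
      intro h
      have := congrArg List.length hsplit
      rw [← h] at this
      simp only [length_append] at this
      have : v.length = 0 := by omega
      exact hv (List.length_eq_zero_iff.mp this)
    exact border_free hu hwu_pre hwu_suf hwne hw0
  · -- s <+: w, and d := drop of w is a border of w
    have hsw : s <+: w := List.prefix_of_prefix_length_le (List.prefix_append s w) hwz hlt.le
    obtain ⟨d, hd⟩ := hsw
    obtain ⟨c, hc⟩ := hwz
    have hd0 : d ≠ [] := by
      intro h
      rw [h, append_nil] at hd
      rw [hd] at hlt
      exact lt_irrefl _ hlt
    -- w ++ c = s ++ w, with w = s ++ d, so s ++ d ++ c = s ++ (s ++ d), so d ++ c = s ++ d = w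
    have hcancel : d ++ c = s ++ d := by
      have : s ++ (d ++ c) = s ++ (s ++ d) := by
        rw [← append_assoc, hd, hc]
      exact List.append_cancel_left this
    have hdpre : d <+: w := by
      refine ⟨c, ?_⟩
      rw [hcancel, hd]
    have hdsuf : d <:+ w := ⟨s, hd⟩
    have hdne : d ≠ w := by
      intro h
      have := congrArg List.length hd
      rw [h] at this
      simp only [length_append] at this
      have : s.length = 0 := by omega
      exact hs0 (List.length_eq_zero_iff.mp this)
    exact border_free hwL hdpre hdsuf hdne hd0

end LyndonAux

/-- In the standard factorization  of a Lyndon word of length ≥ 2,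
where  13:33:46 up 1 min,  0 user,  load average: 0.00, 0.00, 0.00
USER     TTY      FROM             LOGIN@   IDLE   JCPU   PCPU WHAT is the longest proper Lyndon suffix, the factor  is Lyndon. -/
theorem stmt_1 {X : Type*} [LinearOrder X] (u v w : List X)
    (hu : IsLyndon u) (hlen : 2 ≤ u.length)
    (hsplit : u = v ++ w) (hv : v ≠ []) (hw : w ≠ []) (hwL : IsLyndon w)
    (hlongest : ∀ w' : List X, w' <:+ u → w' ≠ u → w' ≠ [] → IsLyndon w' →
      w'.length ≤ w.length) :
    IsLyndon v := by
  classical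
  open List LyndonAux in
  have hw0 : w ≠ [] := hw
  have hvu_pre : v <+: u := hsplit ▸ List.prefix_append v w
  have hwu : SLT w u := by
    refine lyndon_slt_of_suffix hu ⟨v, hsplit.symm⟩ ?_ hw0
    intro h
    have := congrArg List.length hsplit
    rw [← h] at this
    simp only [List.length_append] at this
    have : v.length = 0 := by omega
    exact hv (List.length_eq_zero_iff.mp this)
  refine lyndon_of_slt hv ?_
  suffices H : ∀ n, ∀ s : List X, s.length ≤ n → s <:+ v → s ≠ v → s ≠ [] → SLT s v by
    intro s hs h1 h2
    exact H s.length s le_rfl hs h1 h2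
  intro n
  induction n with
  | zero =>
    intro s hl _ _ h0
    exact absurd (List.length_eq_zero_iff.mp (Nat.le_zero.mp hl)) h0
  | succ n ih =>
    intro s hl hsv hne h0
    obtain ⟨p, hp⟩ := hsv
    have hp0 : p ≠ [] := by rintro rfl; rw [List.nil_append] at hp; exact hne hp
    have hslen : s.length < v.length := by
      have := congrArg List.length hp
      simp only [List.length_append] at this
      have hp0' : 0 < p.length := List.length_pos_iff.mpr hp0
      omega
    have hzu : (s ++ w) <:+ u := ⟨p, by rw [hsplit, ← hp, List.append_assoc]⟩
    have hzneu : s ++ w ≠ u := by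
      intro h
      have := congrArg List.length h
      rw [hsplit] at this
      simp only [List.length_append] at this
      omega
    have hz0 : s ++ w ≠ [] := by simp [h0]
    have hzslt : SLT (s ++ w) u := lyndon_slt_of_suffix hu hzu hzneu hz0
    rcases slt_trichotomy s v with hc | hc | hc | hc
    · -- case B : s <+: v, derive contradiction
      exfalso
      obtain ⟨e, he⟩ := hc
      have he0 : e ≠ [] := by rintro rfl; rw [List.append_nil] at he; exact hne he
      have hs0pos : 0 < s.length := List.length_pos_iff.mpr h0
      have hznl : ¬ IsLyndon (s ++ w) := by
        intro hL
        have := hlongest (s ++ w) hzu hzneu hz0 hL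
        simp only [List.length_append] at this
        omega
      have hex : ∃ t, t <:+ (s ++ w) ∧ t ≠ (s ++ w) ∧ t ≠ [] ∧ ¬ SLT t (s ++ w) := by
        by_contra hA
        push_neg at hA
        exact hznl (lyndon_of_slt hz0 hA)
      obtain ⟨t, htz, htne, ht0, htns⟩ := hex
      have htlen : t.length < s.length + w.length := by
        have := htz.length_le
        simp only [List.length_append] at this
        rcases lt_or_eq_of_le this with h | h
        · exact h
        · exact absurd (htz.eq_of_length (by simp [h])) htne
      have hcontra1 : SLT (s ++ w) w → False := by
        intro hzw
        exact contra1 (e := e) hwL hwu (by rw [hsplit, ← he, List.append_assoc]) h0 hzw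
      rcases lt_trichotomy t.length w.length with hlt | heq | hgt
      · -- t is a proper suffix of w
        have htw : t <:+ w := List.suffix_of_suffix_length_le htz (List.suffix_append s w) hlt.le
        have htnw : t ≠ w := by intro h; rw [h] at hlt; exact lt_irrefl _ hlt
        have h5 : SLT t w := lyndon_slt_of_suffix hwL htw htnw ht0
        rcases slt_trichotomy t (s ++ w) with hd | hd | hd | hd
        · -- t <+: s ++ w : border arguments
          rcases le_or_gt t.length s.length with hle2 | hlt2
          · have hts : t <+: s := List.prefix_of_prefix_length_le hd (List.prefix_append s w) hle2
            have htu_pre : t <+: u := hts.trans ((List.IsPrefix.trans ⟨e, he⟩ hvu_pre))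
            have htu_suf : t <:+ u := htw.trans ⟨v, hsplit.symm⟩
            have htnu : t ≠ u := by
              intro h
              rw [hsplit] at h
              have := congrArg List.length h
              simp only [List.length_append] at this
              omega
            exact border_free hu htu_pre htu_suf htnu ht0
          · have hst : s <+: t := List.prefix_of_prefix_length_le (List.prefix_append s w) hd hlt2.le
            obtain ⟨g, hg⟩ := hst
            have hgw_pre : g <+: w := by
              obtain ⟨c, hcc⟩ := hd
              rw [← hg, List.append_assoc] at hcc
              exact ⟨c, List.append_cancel_left hcc⟩
            have hg0 : g ≠ [] := by
              intro h
              rw [h, List.append_nil] at hg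
              rw [← hg] at hlt2
              exact lt_irrefl _ hlt2
            have hgsuf : g <:+ w := List.IsSuffix.trans ⟨s, hg⟩ htw
            have hgne : g ≠ w := by
              intro h
              have := congrArg List.length hg
              rw [h] at this
              simp only [List.length_append] at this
              omega
            exact border_free hwL hgw_pre hgsuf hgne hg0
        · -- s ++ w <+: t : length contradiction
          have := hd.length_le
          simp only [List.length_append] at this
          omega
        · exact htns hd
        · exact hcontra1 (slt_trans hd h5)
      · -- t = w
        have htw : t <:+ w := List.suffix_of_suffix_length_le htz (List.suffix_append s w) heq.le
        have ht_eq : t = w := htw.eq_of_length heq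
        rw [ht_eq] at htns
        rcases slt_trichotomy w (s ++ w) with hd | hd | hd | hd
        · exact contra2 hu hwL hsplit hv hw0 ⟨e, he⟩ h0 hd
        · have := hd.length_le
          simp only [List.length_append] at this
          omega
        · exact htns hd
        · exact hcontra1 hd
      · -- t = s₁ ++ w with s₁ a shorter proper suffix of s
        obtain ⟨r, hr⟩ := htz
        have hrlen : r.length + t.length = s.length + w.length := by
          have := congrArg List.length hr
          simp only [List.length_append] at this
          omega
        have hr_pre : r <+: s := List.prefix_of_prefix_length_le ⟨t, hr⟩
          (List.prefix_append s w) (by omega)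
        obtain ⟨s₁, hs1⟩ := hr_pre
        have ht_eq : t = s₁ ++ w := by
          have : r ++ t = r ++ (s₁ ++ w) := by
            rw [hr, ← hs1, List.append_assoc]
          exact List.append_cancel_left this
        have hs10 : s₁ ≠ [] := by
          intro h
          rw [h, List.nil_append] at ht_eq
          rw [ht_eq] at hgt
          exact lt_irrefl _ hgt
        have hr0 : r ≠ [] := by
          intro h
          rw [h, List.nil_append] at hr
          exact htne hr
        have hs1len : s₁.length < s.length := by
          have := congrArg List.length hs1
          simp only [List.length_append] at this
          have : 0 < r.length := List.length_pos_iff.mpr hr0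
          omega
        have hs1v : s₁ <:+ v := List.IsSuffix.trans ⟨r, hs1⟩ ⟨p, hp⟩
        have hs1nv : s₁ ≠ v := by
          intro h
          rw [h] at hs1len
          omega
        have ihs1 : SLT s₁ v := ih s₁ (by omega : s₁.length ≤ n) hs1v hs1nv hs10
        rcases slt_trichotomy s₁ s with hd | hd | hd | hd
        · exact slt_not_prefix ihs1 (List.IsPrefix.trans hd ⟨e, he⟩)
        · have := hd.length_le
          omega
        · refine htns ?_
          rw [ht_eq]
          exact slt_append_right w (slt_append_left w hd)
        · exact slt_not_prefix (slt_trans hd ihs1) ⟨e, he⟩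
    · -- v <+: s : impossible by lengths
      have := hc.length_le
      omega
    · exact hc
    · -- SLT v s : contradiction
      exfalso
      have h1 : SLT u s := by rw [hsplit]; exact slt_append_left w hc
      have h2 : SLT (s ++ w) s := slt_trans hzslt h1
      have := h2 []
      rw [List.append_assoc] at this
      exact not_lex_append_self s (w ++ []) this
end

section
/- Viewing the free Lie algebra Lie(X) inside the free associative algebra k⟨X⟩ via (ab) = ab − ba, for every Lyndon–Shirshov word u the leading monomial (with respect to the degree-lexicographic order) of the standard bracketing [u] is u, and its coefficient is 1. -/
/-- brk is a standard bracketing function: on letters it is the letter itself, and on a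
Lyndon word of length ≥ 2 it is the commutator of the standard factorization. -/
def IsStandardBracketing {k X : Type*} [Field k] [LinearOrder X]
    (brk : List X → MonoidAlgebra k (FreeMonoid X)) : Prop :=
  (∀ x : X, brk [x] = MonoidAlgebra.single (FreeMonoid.ofList [x]) 1) ∧
  (∀ u v w : List X, IsLyndon u → 2 ≤ u.length → u = v ++ w → v ≠ [] → w ≠ [] →
    IsLyndon w →
    (∀ w' : List X, w' <:+ u → w' ≠ u → w' ≠ [] → IsLyndon w' → w'.length ≤ w.length) →
    brk u = brk v * brk w - brk w * brk v)

section LexLemmas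

variable {X : Type*} {r : X → X → Prop}

instance instGtSTO {X : Type*} [LinearOrder X] : IsStrictTotalOrder X (· > ·) where
  trans _ _ _ h1 h2 := lt_trans h2 h1
  irrefl _ := lt_irrefl _
  trichotomous a b := fun h1 h2 => le_antisymm (not_lt.1 h1) (not_lt.1 h2)

theorem lex_append_left_iff [IsIrrefl X r] (l : List X) {s t : List X} :
    List.Lex r (l ++ s) (l ++ t) ↔ List.Lex r s t := by
  induction l with
  | nil => simp
  | cons a l ih => simpa [List.lex_cons_iff] using ih

theorem lex_append_of_not_prefix :
    ∀ {s t : List X}, List.Lex r s t → ¬ s <+: t → ∀ (s' t' : List X),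
      List.Lex r (s ++ s') (t ++ t')
  | _, _, List.Lex.nil, hp => absurd (List.nil_prefix) hp
  | _, _, List.Lex.cons h, hp => fun s' t' => by
      simp only [List.cons_append]
      exact List.Lex.cons (lex_append_of_not_prefix h
        (fun hq => hp (List.cons_prefix_cons.2 ⟨rfl, hq⟩)) s' t')
  | _, _, List.Lex.rel h, _ => fun s' t' => List.Lex.rel h

theorem lex_of_lex_append :
    ∀ {v t c d : List X}, List.Lex r (v ++ c) (t ++ d) → ¬ t <+: v →
      t.length ≤ v.length → List.Lex r v t := by
  intro v
  induction v with
  | nil =>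
    intro t c d _ hp hl
    have : t = [] := List.length_eq_zero_iff.1 (Nat.le_zero.1 hl)
    exact absurd (this ▸ List.nil_prefix) hp
  | cons x v ih =>
    intro t c d h hp hl
    match t with
    | [] => exact absurd List.nil_prefix hp
    | y :: t =>
      cases h with
      | cons h =>
        exact List.Lex.cons (ih h (fun hq => hp (List.cons_prefix_cons.2 ⟨rfl, hq⟩))
          (Nat.succ_le_succ_iff.1 hl))
      | rel h => exact List.Lex.rel h

theorem lex_swap :
    ∀ {a b : List X}, List.Lex r a b → a.length = b.length →
      List.Lex (fun x y => r y x) b a := by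
  intro a b h
  induction h with
  | nil => intro h; simp at h
  | cons h ih => intro hl; exact List.Lex.cons (ih (by simpa using hl))
  | rel h => intro _; exact List.Lex.rel h

theorem lex_irrefl' [IsIrrefl X r] (a : List X) : ¬ List.Lex r a a := by
  induction a with
  | nil => exact fun h => by cases h
  | cons x a ih => exact fun h => ih (List.lex_cons_iff.1 h)

end LexLemmas

section Lyndon

variable {X : Type*} [LinearOrder X]

/-- dual-lex: `u` is smaller than all its proper nonempty suffixes w.r.t. `Lex (· > ·)`. -/
theorem IsLyndon.lex_suffix {u s : List X} (hu : IsLyndon u)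
    (hs : s <:+ u) (hsu : s ≠ u) (hsn : s ≠ []) : List.Lex (· > ·) u s := by
  obtain ⟨v, rfl⟩ := hs
  have hv : v ≠ [] := by rintro rfl; exact hsu rfl
  have h1 : List.Lex (· < ·) (s ++ v) (v ++ s) := hu.2 v s hv hsn rfl
  have h2 : List.Lex (· > ·) (v ++ s) (s ++ v) := by
    have := lex_swap h1 (by simp [Nat.add_comm])
    exact this
  by_cases hp : s <+: v ++ s
  · obtain ⟨m, hm⟩ := hp
    have hmn : m ≠ [] := by
      rintro rfl
      exact hsu (by simpa using hm.symm)
    have h3 : List.Lex (· < ·) (m ++ s) (s ++ m) := hu.2 s m hsn hmn hm.symm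
    have h4 : List.Lex (· > ·) (s ++ m) (m ++ s) := by
      have := lex_swap h3 (by simp [Nat.add_comm])
      exact this
    -- from h2 : v ++ s = s ++ m ≺ s ++ v, strip s : m ≺ v
    have h5 : List.Lex (· > ·) m v := by
      rw [← hm] at h2
      exact (lex_append_left_iff s).1 h2
    have hlen : m.length = v.length := by
      have := congrArg List.length hm
      simp at this
      omega
    have hmv : ¬ m <+: v := fun hq => by
      have : m = v := List.IsPrefix.eq_of_length_le hq (le_of_eq hlen.symm)
      rw [this] at h5
      exact lex_irrefl' v h5
    have h6 : List.Lex (· > ·) (m ++ s) (v ++ s) := lex_append_of_not_prefix h5 hmv s s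
    rw [← hm] at h6
    exact absurd h4 (asymm h6)
  · have h7 : List.Lex (· > ·) ((v ++ s) ++ []) (s ++ v) := by simpa using h2
    exact lex_of_lex_append h7 hp (by simp)

theorem isLyndon_of_forall_suffix {u : List X} (hn : u ≠ [])
    (H : ∀ s, s <:+ u → s ≠ u → s ≠ [] → List.Lex (· > ·) u s) : IsLyndon u := by
  refine ⟨hn, fun v w hv hw huvw => ?_⟩
  have hwu : w ≠ u := by
    rintro rfl
    have hl := congrArg List.length huvw
    rw [List.length_append] at hl
    exact hv (List.length_eq_zero_iff.1 (by omega))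
  have h1 : List.Lex (· > ·) u w := H w ⟨v, huvw.symm⟩ hwu hw
  have hp : ¬ u <+: w := fun hq => by
    have hle := hq.length_le
    have hl := congrArg List.length huvw
    rw [List.length_append] at hl
    exact hv (List.length_eq_zero_iff.1 (by omega))
  have h2 : List.Lex (· > ·) (u ++ []) (w ++ v) := lex_append_of_not_prefix h1 hp [] v
  rw [List.append_nil, huvw] at h2
  have h3 := lex_swap h2 (by simp [Nat.add_comm])
  exact h3

/-- minimum of a nonempty list w.r.t. dual-lex. -/
theorem exists_min_lex (L : List (List X)) (hL : L ≠ []) :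
    ∃ m ∈ L, ∀ s ∈ L, ¬ List.Lex (· > ·) s m := by
  induction L with
  | nil => exact absurd rfl hL
  | cons a L ih =>
    rcases eq_or_ne L [] with rfl | hL'
    · refine ⟨a, List.mem_cons_self, ?_⟩
      intro s hs hsa
      rw [List.mem_singleton] at hs
      subst hs
      exact lex_irrefl' _ hsa
    · obtain ⟨m, hm, hmin⟩ := ih hL'
      by_cases ham : List.Lex (· > ·) a m
      · refine ⟨a, List.mem_cons_self, ?_⟩
        intro s hs hsa
        rcases List.mem_cons.1 hs with rfl | hs
        · exact lex_irrefl' s hsa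
        · exact hmin s hs (List.lex_trans (fun h1 h2 => lt_trans h2 h1) hsa ham)
      · refine ⟨m, List.mem_cons.2 (Or.inr hm), ?_⟩
        intro s hs hsm
        rcases List.mem_cons.1 hs with rfl | hs
        · exact ham hsm
        · exact hmin s hs hsm

theorem standard_factorization {u : List X} (hu : IsLyndon u) (h2 : 2 ≤ u.length) :
    ∃ v w : List X, u = v ++ w ∧ v ≠ [] ∧ w ≠ [] ∧ IsLyndon v ∧ IsLyndon w ∧
      (∀ w' : List X, w' <:+ u → w' ≠ u → w' ≠ [] → IsLyndon w' → w'.length ≤ w.length) ∧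
      v.length < u.length ∧ w.length < u.length := by
  classical
  -- the list of proper nonempty suffixes of u
  set L : List (List X) := u.tails.filter (fun s => s ≠ u ∧ s ≠ []) with hLdef
  have hmemL : ∀ s : List X, s ∈ L ↔ (s <:+ u ∧ s ≠ u ∧ s ≠ []) := by
    intro s
    simp [hLdef, List.mem_filter, List.mem_tails, and_assoc]
  have htail : u.tail ∈ L := by
    rw [hmemL]
    refine ⟨List.tail_suffix u, ?_, ?_⟩
    · intro h
      have := congrArg List.length h
      simp at this
      omega
    · intro h
      have := congrArg List.length h
      simp at this
      omega
  obtain ⟨w, hwL, hwmin⟩ := exists_min_lex L (List.ne_nil_of_mem htail)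
  rw [hmemL] at hwL
  obtain ⟨hwsuf, hwu, hwn⟩ := hwL
  obtain ⟨v, hv⟩ := hwsuf
  have hvn : v ≠ [] := by rintro rfl; exact hwu (by simpa using hv)
  -- w is Lyndon
  have hwlyndon : IsLyndon w := by
    apply isLyndon_of_forall_suffix hwn
    intro s hs hsw hsn
    have hsu : s <:+ u := hs.trans ⟨v, hv⟩
    have hslen : s.length < w.length :=
      lt_of_le_of_ne hs.length_le (fun h => hsw (List.IsSuffix.eq_of_length hs h))
    have hwlen' : w.length < u.length := by
      have hl := congrArg List.length hv
      rw [List.length_append] at hl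
      have : v.length ≠ 0 := fun h0 => hvn (List.length_eq_zero_iff.1 h0)
      omega
    have hsune : s ≠ u := fun h => by rw [h] at hslen; omega
    have hsL : s ∈ L := (hmemL s).2 ⟨hsu, hsune, hsn⟩
    rcases trichotomous_of (List.Lex (· > ·)) w s with h | h | h
    · exact h
    · exact absurd h.symm hsw
    · exact absurd h (hwmin s hsL)
  -- maximality of w among Lyndon proper suffixes
  have hwmax : ∀ w' : List X, w' <:+ u → w' ≠ u → w' ≠ [] → IsLyndon w' → w'.length ≤ w.length := by
    intro w' hw'suf hw'u hw'n hw'l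
    by_contra hgt
    push_neg at hgt
    have hws : w <:+ w' := List.suffix_of_suffix_length_le ⟨v, hv⟩ hw'suf (le_of_lt hgt)
    have hwne : w ≠ w' := fun h => by rw [h] at hgt; omega
    have := hw'l.lex_suffix hws hwne hwn
    exact hwmin w' ((hmemL w').2 ⟨hw'suf, hw'u, hw'n⟩) this
  -- v is Lyndon
  have hvlyndon : IsLyndon v := by
    apply isLyndon_of_forall_suffix hvn
    intro t ht htv htn
    have htlen : t.length < v.length :=
      lt_of_le_of_ne ht.length_le (fun h => htv (List.IsSuffix.eq_of_length ht h))
    obtain ⟨p, hp⟩ := ht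
    have hpu : u = p ++ (t ++ w) := by rw [← hv, ← hp, List.append_assoc]
    have hpn : p ≠ [] := by
      rintro rfl
      exact htv (by simpa using hp)
    have htwsuf : t ++ w <:+ u := ⟨p, hpu.symm⟩
    have htwu : t ++ w ≠ u := by
      intro h
      have h1 := congrArg List.length hpu
      have h2 := congrArg List.length h
      simp at h1 h2
      have : p.length ≠ 0 := fun h0 => hpn (List.length_eq_zero_iff.1 h0)
      omega
    have htwn : t ++ w ≠ [] := by simp [hwn]
    have h1 : List.Lex (· > ·) u (t ++ w) := hu.lex_suffix htwsuf htwu htwn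
    by_cases hpre : t <+: v
    · exfalso
      obtain ⟨rr, hrr⟩ := hpre
      have hrrn : rr ≠ [] := by
        rintro rfl
        exact htv (by simpa using hrr)
      have h3 : List.Lex (· > ·) (t ++ (rr ++ w)) (t ++ w) := by
        have : u = t ++ (rr ++ w) := by rw [← hv, ← hrr, List.append_assoc]
        rwa [this] at h1
      have h4 : List.Lex (· > ·) (rr ++ w) w := (lex_append_left_iff t).1 h3
      have hrwL : rr ++ w ∈ L := by
        rw [hmemL]
        refine ⟨⟨t, by rw [← hv, ← hrr, List.append_assoc]⟩, ?_, by simp [hwn]⟩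
        intro h
        have h5 := congrArg List.length h
        have h6 := congrArg List.length hrr
        have h7 := congrArg List.length hv
        rw [List.length_append] at h5 h6 h7
        have : t.length ≠ 0 := fun h0 => htn (List.length_eq_zero_iff.1 h0)
        omega
      exact hwmin (rr ++ w) hrwL h4
    · have h1' : List.Lex (· > ·) (v ++ w) (t ++ w) := by rwa [← hv] at h1
      exact lex_of_lex_append h1' hpre (le_of_lt htlen)
  have hvlen : v.length < u.length := by
    have := congrArg List.length hv
    simp at this
    have : w.length ≠ 0 := fun h0 => hwn (List.length_eq_zero_iff.1 h0)
    omega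
  have hwlen : w.length < u.length := by
    have := congrArg List.length hv
    simp at this
    have : v.length ≠ 0 := fun h0 => hvn (List.length_eq_zero_iff.1 h0)
    omega
  exact ⟨v, w, hv.symm, hvn, hwn, hvlyndon, hwlyndon, hwmax, hvlen, hwlen⟩

/-- combine bounds on factors -/
theorem lex_concat_le {a v b w : List X} (ha : a.length = v.length) (hb : b.length = w.length)
    (h1 : a = v ∨ List.Lex (· < ·) a v) (h2 : b = w ∨ List.Lex (· < ·) b w) :
    a ++ b = v ++ w ∨ List.Lex (· < ·) (a ++ b) (v ++ w) := by
  rcases h1 with rfl | h1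
  · rcases h2 with rfl | h2
    · exact Or.inl rfl
    · exact Or.inr (List.Lex.append_left _ h2 a)
  · right
    have hne : ¬ a <+: v := fun hq => by
      have : a = v := List.IsPrefix.eq_of_length_le hq (le_of_eq ha.symm)
      rw [this] at h1
      exact lex_irrefl' v h1
    exact lex_append_of_not_prefix h1 hne b w

end Lyndon

section Algebra

variable {k X : Type*} [Field k] [LinearOrder X]

theorem brk_key (brk : List X → MonoidAlgebra k (FreeMonoid X))
    (hbrk : IsStandardBracketing brk) :
    ∀ n (u : List X), u.length ≤ n → IsLyndon u →
      (brk u).coeff (FreeMonoid.ofList u) = 1 ∧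
        ∀ m : List X, (brk u).coeff (FreeMonoid.ofList m) ≠ 0 →
          m.length = u.length ∧ (m = u ∨ List.Lex (· < ·) m u) := by
  classical
  intro n
  induction n with
  | zero =>
    intro u hlen hu
    exact absurd (List.length_eq_zero_iff.1 (Nat.le_zero.1 hlen)) hu.1
  | succ n ih =>
    intro u hlen hu
    rcases eq_or_lt_of_le (Nat.one_le_iff_ne_zero.2
      (fun h0 => hu.1 (List.length_eq_zero_iff.1 h0)) : 1 ≤ u.length) with h1 | h2
    · -- single letter
      obtain ⟨x, rfl⟩ := List.length_eq_one_iff.1 h1.symm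
      rw [hbrk.1 x]
      constructor
      · simp [MonoidAlgebra.coeff_single, Finsupp.single_apply]
      · intro m hm
        rw [MonoidAlgebra.coeff_single, Finsupp.single_apply] at hm
        split_ifs at hm with h
        · have : m = [x] := (FreeMonoid.ofList.injective h).symm
          exact ⟨by simp [this], Or.inl this⟩
        · exact absurd rfl hm
    · -- length ≥ 2
      obtain ⟨v, w, huvw, hvn, hwn, hvL, hwL, hwmax, hvlen, hwlen⟩ :=
        standard_factorization hu h2
      have hrec : brk u = brk v * brk w - brk w * brk v :=
        hbrk.2 u v w hu h2 huvw hvn hwn hwL hwmax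
      have ihv := ih v (by omega) hvL
      have ihw := ih w (by omega) hwL
      -- helper: nonzero coefficient of a product decomposes
      have hdecomp : ∀ (f g : MonoidAlgebra k (FreeMonoid X)) (m : List X),
          (f * g).coeff (FreeMonoid.ofList m) ≠ 0 →
          ∃ a b : List X, m = a ++ b ∧ f.coeff (FreeMonoid.ofList a) ≠ 0 ∧
            g.coeff (FreeMonoid.ofList b) ≠ 0 := by
        intro f g m hm
        have hmem : FreeMonoid.ofList m ∈ (f * g).coeff.support := Finsupp.mem_support_iff.2 hm
        have := MonoidAlgebra.support_coeff_mul_subset f g hmem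
        rw [Finset.mem_mul] at this
        obtain ⟨a, haf, b, hbg, hab⟩ := this
        refine ⟨FreeMonoid.toList a, FreeMonoid.toList b, ?_, ?_, ?_⟩
        · calc m = FreeMonoid.toList (FreeMonoid.ofList m) := (FreeMonoid.toList_ofList m).symm
            _ = FreeMonoid.toList (a * b) := by rw [hab]
            _ = FreeMonoid.toList a ++ FreeMonoid.toList b := FreeMonoid.toList_mul a b
        · rw [FreeMonoid.ofList_toList]; exact Finsupp.mem_support_iff.1 haf
        · rw [FreeMonoid.ofList_toList]; exact Finsupp.mem_support_iff.1 hbg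
      -- monomials of brk w * brk v are strictly smaller than u
      have hwv : ∀ m : List X, (brk w * brk v).coeff (FreeMonoid.ofList m) ≠ 0 →
          m.length = u.length ∧ List.Lex (· < ·) m u := by
        intro m hm
        obtain ⟨a, b, rfl, haf, hbg⟩ := hdecomp _ _ m hm
        obtain ⟨halen, hale⟩ := (ihw.2 a haf)
        obtain ⟨hblen, hble⟩ := (ihv.2 b hbg)
        have hlenm : (a ++ b).length = u.length := by
          rw [huvw]; simp; omega
        have hcomb := lex_concat_le halen hblen hale hble
        have hwvlt : List.Lex (· < ·) (w ++ v) (v ++ w) := hu.2 v w hvn hwn huvw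
        refine ⟨hlenm, ?_⟩
        rw [huvw]
        rcases hcomb with h | h
        · rw [h]; exact hwvlt
        · exact List.lex_trans lt_trans h hwvlt
      -- part 2: all monomials
      have hmon : ∀ m : List X, (brk u).coeff (FreeMonoid.ofList m) ≠ 0 →
          m.length = u.length ∧ (m = u ∨ List.Lex (· < ·) m u) := by
        intro m hm
        rw [hrec, MonoidAlgebra.coeff_sub, Finsupp.sub_apply] at hm
        have : (brk v * brk w).coeff (FreeMonoid.ofList m) ≠ 0 ∨
            (brk w * brk v).coeff (FreeMonoid.ofList m) ≠ 0 := by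
          by_contra hc
          push_neg at hc
          rw [hc.1, hc.2, sub_self] at hm
          exact hm rfl
        rcases this with h | h
        · obtain ⟨a, b, rfl, haf, hbg⟩ := hdecomp _ _ m h
          obtain ⟨halen, hale⟩ := (ihv.2 a haf)
          obtain ⟨hblen, hble⟩ := (ihw.2 b hbg)
          have hlenm : (a ++ b).length = u.length := by
            rw [huvw]; simp; omega
          have hcomb := lex_concat_le halen hblen hale hble
          rw [← huvw] at hcomb
          exact ⟨hlenm, hcomb⟩
        · obtain ⟨h1, h2'⟩ := hwv m h
          exact ⟨h1, Or.inr h2'⟩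
      refine ⟨?_, hmon⟩
      -- coefficient at u is 1
      rw [hrec, MonoidAlgebra.coeff_sub, Finsupp.sub_apply]
      have hzero : (brk w * brk v).coeff (FreeMonoid.ofList u) = 0 := by
        by_contra hc
        obtain ⟨_, hlt⟩ := hwv u hc
        exact lex_irrefl' u hlt
      rw [hzero, sub_zero]
      -- antidiagonal computation
      have hanti : (brk v * brk w).coeff (FreeMonoid.ofList u) =
          ∑ i ∈ Finset.range (u.length + 1),
            (brk v).coeff (FreeMonoid.ofList (u.take i)) * (brk w).coeff (FreeMonoid.ofList (u.drop i)) := by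
        rw [MonoidAlgebra.coeff_mul_antidiag (brk v) (brk w) (FreeMonoid.ofList u)
          ((Finset.range (u.length + 1)).image
            (fun i => (FreeMonoid.ofList (u.take i), FreeMonoid.ofList (u.drop i))))]
        · rw [Finset.sum_image]
          intro i hi j hj hij
          rw [Finset.mem_coe, Finset.mem_range] at hi hj
          have h1 := congrArg (fun p => (FreeMonoid.toList p.1).length) hij
          simpa [List.length_take, Nat.min_eq_left (Nat.lt_succ_iff.1 hi),
            Nat.min_eq_left (Nat.lt_succ_iff.1 hj)] using h1
        · intro p
          constructor
          · intro hp
            rw [Finset.mem_image] at hp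
            obtain ⟨i, _, hpi⟩ := hp
            rw [← hpi]
            have : FreeMonoid.ofList (u.take i) * FreeMonoid.ofList (u.drop i) =
                FreeMonoid.ofList (u.take i ++ u.drop i) := rfl
            rw [this, List.take_append_drop]
          · intro hp
            rw [Finset.mem_image]
            refine ⟨(FreeMonoid.toList p.1).length, ?_, ?_⟩
            · rw [Finset.mem_range, Nat.lt_succ_iff]
              have h3 : FreeMonoid.toList p.1 ++ FreeMonoid.toList p.2 = u := by
                rw [← FreeMonoid.toList_mul, hp, FreeMonoid.toList_ofList]
              have h4 := congrArg List.length h3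
              rw [List.length_append] at h4
              omega
            · have h3 := congrArg FreeMonoid.toList hp
              rw [FreeMonoid.toList_mul, FreeMonoid.toList_ofList] at h3
              have h4 : u.take (FreeMonoid.toList p.1).length = FreeMonoid.toList p.1 := by
                rw [← h3, List.take_left]
              have h5 : u.drop (FreeMonoid.toList p.1).length = FreeMonoid.toList p.2 := by
                rw [← h3, List.drop_left]
              rw [h4, h5, FreeMonoid.ofList_toList, FreeMonoid.ofList_toList]
          -- done
      rw [hanti]
      rw [Finset.sum_eq_single v.length]
      · have ht : u.take v.length = v := by rw [huvw, List.take_left]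
        have hd : u.drop v.length = w := by rw [huvw, List.drop_left]
        rw [ht, hd, ihv.1, ihw.1, one_mul]
      · intro i hi hne
        rw [Finset.mem_range, Nat.lt_succ_iff] at hi
        by_contra hc
        have hfne : (brk v).coeff (FreeMonoid.ofList (u.take i)) ≠ 0 := by
          intro h0
          rw [h0, zero_mul] at hc
          exact hc rfl
        have hlt := (ihv.2 _ hfne).1
        rw [List.length_take, Nat.min_eq_left hi] at hlt
        exact hne hlt
      · intro h
        exfalso
        rw [Finset.mem_range, Nat.lt_succ_iff] at h
        exact h (by rw [huvw]; simp)

end Algebra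

/-- For a Lyndon word u, the leading monomial (deg-lex) of its standard bracketing
is u, with coefficient 1: the coefficient of u in brk u is 1, and every other word
occurring in brk u is smaller than u in deg-lex order. -/
theorem stmt_8 {k X : Type*} [Field k] [LinearOrder X]
    (brk : List X → MonoidAlgebra k (FreeMonoid X))
    (hbrk : IsStandardBracketing brk)
    (u : List X) (hu : IsLyndon u) :
    (brk u).coeff (FreeMonoid.ofList u) = 1 ∧
      ∀ m : List X, (brk u).coeff (FreeMonoid.ofList m) ≠ 0 →
        m = u ∨ m.length < u.length ∨
          (m.length = u.length ∧ List.Lex (· < ·) m u) := by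
  obtain ⟨h1, h2⟩ := brk_key brk hbrk u.length u le_rfl hu
  refine ⟨h1, fun m hm => ?_⟩
  obtain ⟨hlen, hle⟩ := h2 m hm
  rcases hle with rfl | hlt
  · exact Or.inl rfl
  · exact Or.inr (Or.inr ⟨hlen, hlt⟩)
end

section
/- Let x, y ∈ X with x > y, and u ∈ X* with every letter of u strictly smaller than y. Then xuy is a Lyndon word. -/
/-- If  and every letter of  is , then  is a Lyndon word. -/
theorem stmt_15 {X : Type*} [LinearOrder X] (x y : X) (u : List X)
    (hxy : y < x) (hu : ∀ z ∈ u, z < y) :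
    IsLyndon (x :: u ++ [y]) := by
  constructor
  · simp
  · intro v w hv hw heq
    obtain ⟨a, v', rfl⟩ := List.exists_cons_of_ne_nil hv
    obtain ⟨b, w', rfl⟩ := List.exists_cons_of_ne_nil hw
    have h : x :: (u ++ [y]) = a :: (v' ++ b :: w') := by simpa using heq
    injection h with h1 h2
    subst h1
    have hb : b < x := by
      have hmem : b ∈ u ++ [y] := by rw [h2]; simp
      rcases List.mem_append.1 hmem with h | h
      · exact (hu b h).trans hxy
      · simp at h; subst h; exact hxy
    exact List.Lex.rel hb
end
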